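/- arXiv:2506.05185 — 3 statements merged into one kernel-verified Lean document; each statement's English description precedes it below -/
import Mathlib

section
/- Let Q be a proper convex quadrangle in ℝ² such that the midpoints of its four edges are exactly the points (1,0), (0,1), (-1,0), (0,-1) (the vertices of the ℓ∞ unit ball's dual, i.e. the ℓ¹ unit ball). Then Q is contained in 3·B∞², the ℓ∞ ball of radius 3 centered at the origin. -/
/-- If the midpoints of the edges of a proper convex quadrangle `Q` are the points
`(1,0), (0,1), (-1,0), (0,-1)`, then `Q ⊆ 3 ⬝ B∞² = [-3,3]²`. -/
theorem quadrangle_subset_three_ball (A B C D : ℝ × ℝ)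
    (hA : A ∉ convexHull ℝ {B, C, D}) (hB : B ∉ convexHull ℝ {A, C, D})
    (hC : C ∉ convexHull ℝ {A, B, D}) (hD : D ∉ convexHull ℝ {A, B, C})
    (horder : (segment ℝ A C ∩ segment ℝ B D).Nonempty)
    (h1 : midpoint ℝ A B = ((1 : ℝ), (0 : ℝ)))
    (h2 : midpoint ℝ B C = ((0 : ℝ), (1 : ℝ)))
    (h3 : midpoint ℝ C D = ((-1 : ℝ), (0 : ℝ)))
    (h4 : midpoint ℝ D A = ((0 : ℝ), (-1 : ℝ))) :
    convexHull ℝ {A, B, C, D} ⊆ Set.Icc ((-3 : ℝ), (-3 : ℝ)) ((3 : ℝ), (3 : ℝ)) := by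
  simp only [midpoint, AffineMap.lineMap_apply, vsub_eq_sub, vadd_eq_add, invOf_eq_inv,
    Prod.ext_iff, Prod.smul_fst, Prod.smul_snd, Prod.fst_add, Prod.snd_add, Prod.fst_sub,
    Prod.snd_sub, smul_eq_mul] at h1 h2 h3 h4
  obtain ⟨e1, e2⟩ := h1
  obtain ⟨e3, e4⟩ := h2
  obtain ⟨e5, e6⟩ := h3
  obtain ⟨e7, e8⟩ := h4
  norm_num at e1 e2 e3 e4 e5 e6 e7 e8
  obtain ⟨P, hPAC, hPBD⟩ := horder
  obtain ⟨a, b, ha, hb, hab, hP1⟩ := hPAC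
  obtain ⟨c, d, hc, hd, hcd, hP2⟩ := hPBD
  rw [← hP2] at hP1
  have k1 := congrArg Prod.fst hP1
  have k2 := congrArg Prod.snd hP1
  simp only [Prod.fst_add, Prod.snd_add, Prod.smul_fst, Prod.smul_snd, smul_eq_mul] at k1 k2
  have hbnd : ∀ p ∈ ({A, B, C, D} : Set (ℝ × ℝ)),
      p ∈ Set.Icc ((-3 : ℝ), (-3 : ℝ)) ((3 : ℝ), (3 : ℝ)) := by
    intro p hp
    have hx1 : 0 ≤ B.1 := by nlinarith
    have hx2 : B.1 ≤ 2 := by nlinarith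
    have hy1 : 0 ≤ B.2 := by nlinarith
    have hy2 : B.2 ≤ 2 := by nlinarith
    simp only [Set.mem_insert_iff, Set.mem_singleton_iff] at hp
    rcases hp with rfl | rfl | rfl | rfl <;>
      · refine Set.mem_Icc.2 ⟨Prod.le_def.2 ⟨?_, ?_⟩, Prod.le_def.2 ⟨?_, ?_⟩⟩ <;>
        · norm_num
          linarith
  exact convexHull_min hbnd (convex_Icc _ _)
end

section
/- For c ≥ 14/5 and δ ∈ [0, 1/10], define ζ_{c,δ}(t) = (c/(5(1-2δ))) · [ ((c(3-4δ)+t-1)(4c(3-4δ)+(7+4δ-20δ²)(t-1))) / (c(9-20δ+20δ²)+4(t-1)) - (3-4δ)(t-1) ]. Then ζ_{c,δ} is strictly decreasing on the interval [-c/2, ∞). -/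
/-- For `c ≥ 14/5` and `δ ∈ [0, 1/10]`, the function `ζ_{c,δ}` is strictly decreasing
on `[-c/2, ∞)`. -/
theorem zeta_strictAntiOn (c δ : ℝ) (hc : 14 / 5 ≤ c) (hδ : δ ∈ Set.Icc (0 : ℝ) (1 / 10)) :
    StrictAntiOn (fun t : ℝ =>
      c / (5 * (1 - 2 * δ)) *
        (((c * (3 - 4 * δ) + t - 1) *
            (4 * c * (3 - 4 * δ) + (7 + 4 * δ - 20 * δ ^ 2) * (t - 1))) /
              (c * (9 - 20 * δ + 20 * δ ^ 2) + 4 * (t - 1)) -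
          (3 - 4 * δ) * (t - 1)))
      (Set.Ici (-(c / 2))) := by
  obtain ⟨hδ0, hδ1⟩ := hδ
  intro x hx y hy hxy
  simp only [Set.mem_Ici] at hx hy
  have hc0 : (0:ℝ) < c := by linarith
  have hB : (0:ℝ) < 1 - 2 * δ := by linarith
  have hDx : (0:ℝ) < c * (9 - 20 * δ + 20 * δ ^ 2) + 4 * (x - 1) := by
    nlinarith [mul_nonneg hδ0 (by linarith : (0:ℝ) ≤ 1/10 - δ), sq_nonneg δ]
  have hDy : (0:ℝ) < c * (9 - 20 * δ + 20 * δ ^ 2) + 4 * (y - 1) := by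
    nlinarith [mul_nonneg hδ0 (by linarith : (0:ℝ) ≤ 1/10 - δ), sq_nonneg δ]
  have hu : (0:ℝ) ≤ x + c / 2 := by linarith
  have hv : (0:ℝ) ≤ y + c / 2 := by linarith
  have hslope : (0:ℝ) ≤ 5 * c * (7 - 20 * δ + 20 * δ ^ 2) - 20 := by
    nlinarith [mul_nonneg hδ0 (by linarith : (0:ℝ) ≤ 1/10 - δ)]
  have hmin : (0:ℝ) < c ^ 2 * (50 - 380 * δ + 980 * δ ^ 2 - 800 * δ ^ 3) +
      c * (-70 + 200 * δ - 200 * δ ^ 2) + 20 := by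
    nlinarith [mul_nonneg hδ0 (by linarith : (0:ℝ) ≤ 1/10 - δ),
      mul_nonneg (mul_nonneg hδ0 hδ0) (by linarith : (0:ℝ) ≤ 1/10 - δ),
      mul_nonneg (mul_nonneg hδ0 (by linarith : (0:ℝ) ≤ 1/10 - δ)) hc0.le,
      mul_nonneg (mul_nonneg (mul_nonneg hδ0 hδ0) (by linarith : (0:ℝ) ≤ 1/10 - δ)) hc0.le,
      mul_nonneg (mul_nonneg hδ0 (by linarith : (0:ℝ) ≤ 1/10 - δ)) (mul_pos hc0 hc0).le,
      mul_nonneg (by linarith : (0:ℝ) ≤ c - 14/5) hc0.le,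
      mul_nonneg (mul_nonneg (by linarith : (0:ℝ) ≤ c - 14/5) hc0.le) hδ0,
      sq_nonneg (c - 14/5)]
  have hH : (0:ℝ) < c ^ 2 * (90 - 480 * δ + 1080 * δ ^ 2 - 800 * δ ^ 3) +
      5 * c * (9 - 20 * δ + 20 * δ ^ 2) * ((x - 1) + (y - 1)) + 20 * (x - 1) * (y - 1) := by
    nlinarith [mul_nonneg hu hv, mul_nonneg (add_nonneg hu hv) hslope, hmin]
  simp only
  rw [← sub_pos]
  have hkey :
      c / (5 * (1 - 2 * δ)) *
        (((c * (3 - 4 * δ) + x - 1) *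
            (4 * c * (3 - 4 * δ) + (7 + 4 * δ - 20 * δ ^ 2) * (x - 1))) /
              (c * (9 - 20 * δ + 20 * δ ^ 2) + 4 * (x - 1)) -
          (3 - 4 * δ) * (x - 1)) -
      c / (5 * (1 - 2 * δ)) *
        (((c * (3 - 4 * δ) + y - 1) *
            (4 * c * (3 - 4 * δ) + (7 + 4 * δ - 20 * δ ^ 2) * (y - 1))) /
              (c * (9 - 20 * δ + 20 * δ ^ 2) + 4 * (y - 1)) -
          (3 - 4 * δ) * (y - 1)) =
      c * (1 - 2 * δ) * (y - x) *
        (c ^ 2 * (90 - 480 * δ + 1080 * δ ^ 2 - 800 * δ ^ 3) +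
          5 * c * (9 - 20 * δ + 20 * δ ^ 2) * ((x - 1) + (y - 1)) + 20 * (x - 1) * (y - 1)) /
        (5 * (c * (9 - 20 * δ + 20 * δ ^ 2) + 4 * (x - 1)) *
          (c * (9 - 20 * δ + 20 * δ ^ 2) + 4 * (y - 1))) := by
    have h1 := hDx.ne'
    have h2 := hDy.ne'
    have h3 := hB.ne'
    generalize hX : c * (9 - 20 * δ + 20 * δ ^ 2) + 4 * (x - 1) = X at h1 ⊢
    generalize hY : c * (9 - 20 * δ + 20 * δ ^ 2) + 4 * (y - 1) = Y at h2 ⊢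
    field_simp
    subst hX hY
    ring
  rw [hkey]
  have hyx : (0:ℝ) < y - x := by linarith
  positivity
end

section
/- For c ≥ 14/5, δ ∈ [0, 1/10], and all t ≥ -c/2: ζ_{c,δ}(t) ≤ (c/20)·(8(c+2) + 4c/(1-2δ) + ((c-2)(c(43-54δ)-22-20δ))/(c(7-20δ+20δ²)-4)). -/
/-- For `c ≥ 14/5`, `δ ∈ [0, 1/10]`, and all `t ≥ -c/2`, the value `ζ_{c,δ}(t)` is bounded
above by `ζ_{c,δ}(-c/2)` in its closed form. -/
theorem zeta_le_value_at_left_endpoint (c δ t : ℝ) (hc : 14 / 5 ≤ c)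
    (hδ : δ ∈ Set.Icc (0 : ℝ) (1 / 10)) (ht : -(c / 2) ≤ t) :
    c / (5 * (1 - 2 * δ)) *
        (((c * (3 - 4 * δ) + t - 1) *
            (4 * c * (3 - 4 * δ) + (7 + 4 * δ - 20 * δ ^ 2) * (t - 1))) /
              (c * (9 - 20 * δ + 20 * δ ^ 2) + 4 * (t - 1)) -
          (3 - 4 * δ) * (t - 1)) ≤
      c / 20 * (8 * (c + 2) + 4 * c / (1 - 2 * δ) +
        (c - 2) * (c * (43 - 54 * δ) - 22 - 20 * δ) / (c * (7 - 20 * δ + 20 * δ ^ 2) - 4)) := by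
  obtain ⟨hδ0, hδ1⟩ := hδ
  have h2d : (0:ℝ) < 1 - 2 * δ := by linarith
  have hE : (0:ℝ) < c * (7 - 20 * δ + 20 * δ ^ 2) - 4 := by
    nlinarith [mul_nonneg hδ0 (by linarith : (0:ℝ) ≤ 1/10 - δ),
      mul_nonneg (by linarith : (0:ℝ) ≤ c - 14/5)
        (mul_nonneg hδ0 (by linarith : (0:ℝ) ≤ 1/10 - δ))]
  have hD1 : (0:ℝ) < c * (9 - 20 * δ + 20 * δ ^ 2) + 4 * (t - 1) := by
    nlinarith [hE]
  have hQ2 : (0:ℝ) ≤ 40 + c * (-140 + 400 * δ - 400 * δ ^ 2)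
      + c ^ 2 * (100 - 760 * δ + 1960 * δ ^ 2 - 1600 * δ ^ 3) := by
    have hx : (0:ℝ) ≤ c - 14/5 := by linarith
    have hd1 : (0:ℝ) ≤ 1/10 - δ := by linarith
    nlinarith [mul_nonneg hδ0 hd1, mul_nonneg hx hδ0, mul_nonneg hx hd1,
      mul_nonneg (mul_nonneg hx hx) hδ0, mul_nonneg (mul_nonneg hx hx) hd1,
      mul_nonneg (mul_nonneg hx hδ0) hd1, mul_nonneg (mul_nonneg hδ0 hδ0) hd1,
      mul_nonneg (mul_nonneg (mul_nonneg hx hx) hδ0) hd1,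
      mul_nonneg (mul_nonneg (mul_nonneg hx hδ0) hδ0) hd1,
      sq_nonneg (c - 14/5), sq_nonneg δ]
  have hc0 : (0:ℝ) < c := by linarith
  have ht2 : (0:ℝ) ≤ 2 * t + c := by linarith
  have hnum : (0:ℝ) ≤ (2 * t + c) * ((1 - 2*δ)^2 * c *
      (10 * (c * (7 - 20 * δ + 20 * δ ^ 2) - 4) * (t + c/2)
        + (40 + c * (-140 + 400 * δ - 400 * δ ^ 2)
          + c ^ 2 * (100 - 760 * δ + 1960 * δ ^ 2 - 1600 * δ ^ 3)))) := by
    apply mul_nonneg ht2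
    apply mul_nonneg (mul_nonneg (sq_nonneg _) hc0.le)
    have : (0:ℝ) ≤ 10 * (c * (7 - 20 * δ + 20 * δ ^ 2) - 4) * (t + c/2) :=
      mul_nonneg (by linarith) (by linarith)
    linarith
  have key : c / 20 * (8 * (c + 2) + 4 * c / (1 - 2 * δ) +
        (c - 2) * (c * (43 - 54 * δ) - 22 - 20 * δ) / (c * (7 - 20 * δ + 20 * δ ^ 2) - 4))
      - c / (5 * (1 - 2 * δ)) *
        (((c * (3 - 4 * δ) + t - 1) *
            (4 * c * (3 - 4 * δ) + (7 + 4 * δ - 20 * δ ^ 2) * (t - 1))) /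
              (c * (9 - 20 * δ + 20 * δ ^ 2) + 4 * (t - 1)) -
          (3 - 4 * δ) * (t - 1))
      = (2 * t + c) * ((1 - 2*δ)^2 * c *
          (10 * (c * (7 - 20 * δ + 20 * δ ^ 2) - 4) * (t + c/2)
            + (40 + c * (-140 + 400 * δ - 400 * δ ^ 2)
              + c ^ 2 * (100 - 760 * δ + 1960 * δ ^ 2 - 1600 * δ ^ 3))))
        / (20 * (1 - 2 * δ) * (c * (9 - 20 * δ + 20 * δ ^ 2) + 4 * (t - 1))
            * (c * (7 - 20 * δ + 20 * δ ^ 2) - 4)) := by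
    field_simp
    ring
  have hden : (0:ℝ) < 20 * (1 - 2 * δ) * (c * (9 - 20 * δ + 20 * δ ^ 2) + 4 * (t - 1))
      * (c * (7 - 20 * δ + 20 * δ ^ 2) - 4) := by positivity
  have := div_nonneg hnum hden.le
  linarith [key ▸ this]
end
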